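/- Let F : ℝ_+ × ℝ_+^m → ℝ be such that for a.e. r, F(r, ·) is supermodular and for every i, every h ≥ 0 and a.e. R ≥ r ≥ 0, F(r, y + h e_i) + F(R, y) ≥ F(R, y + h e_i) + F(r, y). Let U = (u_1,…,u_m) with u_i : ℝ^N → ℝ_+ measurable, and suppose ∫ F(|x|, U(x)) dx and ∫ F(|x|, U^H(x)) dx are well-defined and finite for a closed half-space H containing the origin. Then ∫_{ℝ^N} F(|x|, U^H(x)) dx ≥ ∫_{ℝ^N} F(|x|, U(x)) dx. -/

import Mathlib

open MeasureTheory ENNReal NNReal Filter Topology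

/-- Reflection of `x` across the hyperplane `{x | ⟪x, e⟫ = t}`. -/
noncomputable def reflH {N : ℕ} (e : EuclideanSpace ℝ (Fin N)) (t : ℝ)
    (x : EuclideanSpace ℝ (Fin N)) : EuclideanSpace ℝ (Fin N) :=
  x - (2 * ((inner ℝ x e : ℝ) - t)) • e

/-- Polarization of `u` with respect to the closed half-space `{x | t ≤ ⟪x, e⟫}`. -/
noncomputable def polarize {N : ℕ} (e : EuclideanSpace ℝ (Fin N)) (t : ℝ)
    (u : EuclideanSpace ℝ (Fin N) → ℝ) (x : EuclideanSpace ℝ (Fin N)) : ℝ :=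
  if t ≤ (inner ℝ x e : ℝ) then max (u x) (u (reflH e t x)) else min (u x) (u (reflH e t x))



section comb
variable {m : ℕ} (F : ℝ → (Fin m → ℝ) → ℝ)

lemma sum_single_nonneg {k : Fin m → ℝ} (hk : 0 ≤ k) (s : Finset (Fin m)) :
    0 ≤ ∑ j ∈ s, Pi.single j (k j) :=
  Finset.sum_nonneg fun j _ => by
    intro i
    classical
    simp only [Pi.single_apply, Pi.zero_apply]
    split
    · exact hk j
    · exact le_rfl

lemma monodiff_vec
    (hmonodiff : ∀ r R : ℝ, 0 ≤ r → r ≤ R → ∀ y : Fin m → ℝ, 0 ≤ y → ∀ h : ℝ, 0 ≤ h →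
      ∀ i : Fin m, F R (y + Pi.single i h) + F r y ≤ F r (y + Pi.single i h) + F R y)
    {r R : ℝ} (hr : 0 ≤ r) (hrR : r ≤ R) {y : Fin m → ℝ} (hy : 0 ≤ y)
    {k : Fin m → ℝ} (hk : 0 ≤ k) :
    F R (y + k) + F r y ≤ F r (y + k) + F R y := by
  classical
  have key : ∀ s : Finset (Fin m),
      F R (y + ∑ j ∈ s, Pi.single j (k j)) + F r y ≤
        F r (y + ∑ j ∈ s, Pi.single j (k j)) + F R y := by
    intro s
    induction s using Finset.cons_induction with
    | empty => simp only [Finset.sum_empty, add_zero]; linarith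
    | cons j s hj IH =>
      set z := y + ∑ j ∈ s, Pi.single j (k j) with hz
      have hznn : 0 ≤ z := le_trans hy (le_add_of_nonneg_right (sum_single_nonneg hk s))
      have hstep := hmonodiff r R hr hrR z hznn (k j) (hk j) j
      have hrw : y + ∑ i ∈ Finset.cons j s hj, Pi.single i (k i) = z + Pi.single j (k j) := by
        rw [Finset.sum_cons, hz]; abel
      rw [hrw]; linarith
  have := key Finset.univ
  rwa [Finset.univ_sum_single] at this

lemma super_single_vec
    (hsuper : ∀ r : ℝ, 0 ≤ r → ∀ y : Fin m → ℝ, 0 ≤ y → ∀ h k : ℝ, 0 ≤ h → 0 ≤ k →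
      ∀ i j : Fin m, i ≠ j →
        F r (y + Pi.single i h) + F r (y + Pi.single j k) ≤
          F r (y + Pi.single i h + Pi.single j k) + F r y)
    {r : ℝ} (hr : 0 ≤ r) {y : Fin m → ℝ} (hy : 0 ≤ y) (i : Fin m) {h : ℝ} (hh : 0 ≤ h)
    {k : Fin m → ℝ} (hk : 0 ≤ k) (hki : k i = 0) :
    F r (y + Pi.single i h) + F r (y + k) ≤ F r (y + Pi.single i h + k) + F r y := by
  classical
  have key : ∀ s : Finset (Fin m),
      F r (y + Pi.single i h) + F r (y + ∑ j ∈ s, Pi.single j (k j)) ≤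
        F r (y + Pi.single i h + ∑ j ∈ s, Pi.single j (k j)) + F r y := by
    intro s
    induction s using Finset.cons_induction with
    | empty => simp only [Finset.sum_empty, add_zero]; linarith
    | cons j s hj IH =>
      by_cases hji : j = i
      · have : Pi.single j (k j) = (0 : Fin m → ℝ) := by rw [hji, hki]; ext i'; simp
        simpa [Finset.sum_cons, this] using IH
      · set z := y + ∑ j ∈ s, Pi.single j (k j) with hz
        have hznn : 0 ≤ z := le_trans hy (le_add_of_nonneg_right (sum_single_nonneg hk s))
        have hstep := hsuper r hr z hznn h (k j) hh (hk j) i j (Ne.symm hji)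
        have e1 : y + ∑ i' ∈ Finset.cons j s hj, Pi.single i' (k i') =
            z + Pi.single j (k j) := by rw [Finset.sum_cons, hz]; abel
        have e2 : y + Pi.single i h + ∑ i' ∈ Finset.cons j s hj, Pi.single i' (k i') =
            z + Pi.single i h + Pi.single j (k j) := by rw [Finset.sum_cons, hz]; abel
        have e3 : y + Pi.single i h + ∑ j ∈ s, Pi.single j (k j) = z + Pi.single i h := by
          rw [hz]; abel
        rw [e1, e2]
        rw [e3] at IH
        linarith
  have := key Finset.univ
  rwa [Finset.univ_sum_single] at this

lemma super_vec
    (hsuper : ∀ r : ℝ, 0 ≤ r → ∀ y : Fin m → ℝ, 0 ≤ y → ∀ h k : ℝ, 0 ≤ h → 0 ≤ k →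
      ∀ i j : Fin m, i ≠ j →
        F r (y + Pi.single i h) + F r (y + Pi.single j k) ≤
          F r (y + Pi.single i h + Pi.single j k) + F r y)
    {r : ℝ} (hr : 0 ≤ r) {y : Fin m → ℝ} (hy : 0 ≤ y)
    {h k : Fin m → ℝ} (hh : 0 ≤ h) (hk : 0 ≤ k) (hdisj : ∀ i, h i = 0 ∨ k i = 0) :
    F r (y + h) + F r (y + k) ≤ F r (y + h + k) + F r y := by
  classical
  have key : ∀ s : Finset (Fin m),
      F r (y + ∑ i ∈ s, Pi.single i (h i)) + F r (y + k) ≤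
        F r (y + ∑ i ∈ s, Pi.single i (h i) + k) + F r y := by
    intro s
    induction s using Finset.cons_induction with
    | empty => simp only [Finset.sum_empty, add_zero]; linarith
    | cons i s hi IH =>
      rcases hdisj i with hi0 | hki
      · have : Pi.single i (h i) = (0 : Fin m → ℝ) := by rw [hi0]; ext i'; simp
        simpa [Finset.sum_cons, this] using IH
      · set z := y + ∑ i ∈ s, Pi.single i (h i) with hz
        have hznn : 0 ≤ z := le_trans hy (le_add_of_nonneg_right (sum_single_nonneg hh s))
        have hstep := super_single_vec F hsuper hr hznn i (hh i) hk hki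
        have e1 : y + ∑ i' ∈ Finset.cons i s hi, Pi.single i' (h i') =
            z + Pi.single i (h i) := by rw [Finset.sum_cons, hz]; abel
        rw [e1]
        linarith
  have := key Finset.univ
  rwa [Finset.univ_sum_single] at this

lemma two_point
    (hsuper : ∀ r : ℝ, 0 ≤ r → ∀ y : Fin m → ℝ, 0 ≤ y → ∀ h k : ℝ, 0 ≤ h → 0 ≤ k →
      ∀ i j : Fin m, i ≠ j →
        F r (y + Pi.single i h) + F r (y + Pi.single j k) ≤
          F r (y + Pi.single i h + Pi.single j k) + F r y)
    (hmonodiff : ∀ r R : ℝ, 0 ≤ r → r ≤ R → ∀ y : Fin m → ℝ, 0 ≤ y → ∀ h : ℝ, 0 ≤ h →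
      ∀ i : Fin m, F R (y + Pi.single i h) + F r y ≤ F r (y + Pi.single i h) + F R y)
    {r R : ℝ} (hr : 0 ≤ r) (hrR : r ≤ R) {a b : Fin m → ℝ} (ha : 0 ≤ a) (hb : 0 ≤ b) :
    F r a + F R b ≤ F r (fun i => max (a i) (b i)) + F R (fun i => min (a i) (b i)) := by
  classical
  set c : Fin m → ℝ := fun i => min (a i) (b i) with hc
  set h : Fin m → ℝ := fun i => a i - c i with hh
  set k : Fin m → ℝ := fun i => b i - c i with hk
  have hcnn : 0 ≤ c := fun i => le_min (ha i) (hb i)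
  have hhnn : 0 ≤ h := fun i => by simp [hh, hc]
  have hknn : 0 ≤ k := fun i => by simp [hk, hc]
  have hdisj : ∀ i, h i = 0 ∨ k i = 0 := by
    intro i
    rcases le_total (a i) (b i) with hab | hab
    · left; simp [hh, hc, min_eq_left hab]
    · right; simp [hk, hc, min_eq_right hab]
  have hca : c + h = a := by funext i; simp [hh]
  have hcb : c + k = b := by funext i; simp [hk]
  have hmax : c + h + k = fun i => max (a i) (b i) := by
    funext i
    simp only [Pi.add_apply, hh, hk, hc]
    rcases le_total (a i) (b i) with hab | hab
    · simp [min_eq_left hab, max_eq_right hab]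
    · simp [min_eq_right hab, max_eq_left hab]
  have hS := super_vec F hsuper hr hcnn hhnn hknn hdisj
  rw [hmax, hca, hcb] at hS
  have hM := monodiff_vec F hmonodiff hr hrR hcnn hknn
  rw [hcb] at hM
  linarith

end comb



section geom
variable {N : ℕ} {e : EuclideanSpace ℝ (Fin N)}

lemma inner_ee (he : ‖e‖ = 1) : (inner ℝ e e : ℝ) = 1 := by
  rw [real_inner_self_eq_norm_sq, he]; norm_num

lemma inner_reflH (he : ‖e‖ = 1) (t : ℝ) (x : EuclideanSpace ℝ (Fin N)) :
    (inner ℝ (reflH e t x) e : ℝ) = 2 * t - inner ℝ x e := by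
  unfold reflH
  rw [inner_sub_left, real_inner_smul_left, inner_ee he]
  ring

lemma reflH_invol (he : ‖e‖ = 1) (t : ℝ) (x : EuclideanSpace ℝ (Fin N)) :
    reflH e t (reflH e t x) = x := by
  have h1 := inner_reflH he t x
  have key : reflH e t (reflH e t x) =
      reflH e t x - (2 * ((inner ℝ (reflH e t x) e : ℝ) - t)) • e := rfl
  rw [key, h1]
  unfold reflH
  rw [sub_sub, ← add_smul]
  have h2 : (2 * ((inner ℝ x e : ℝ) - t)) + 2 * (2 * t - (inner ℝ x e : ℝ) - t) = 0 := by ring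
  rw [h2, zero_smul, sub_zero]

lemma norm_reflH_sq (he : ‖e‖ = 1) (t : ℝ) (x : EuclideanSpace ℝ (Fin N)) :
    ‖reflH e t x‖ ^ 2 = ‖x‖ ^ 2 - 4 * ((inner ℝ x e : ℝ) - t) * t := by
  have hn : ‖(2 * ((inner ℝ x e : ℝ) - t)) • e‖ ^ 2 = (2 * ((inner ℝ x e : ℝ) - t)) ^ 2 := by
    rw [norm_smul, Real.norm_eq_abs, he, mul_one, sq_abs]
  rw [reflH, @norm_sub_sq_real, hn, real_inner_smul_right]
  ring

lemma norm_le_reflH (he : ‖e‖ = 1) {t : ℝ} (ht : t ≤ 0) {x : EuclideanSpace ℝ (Fin N)}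
    (hx : t ≤ (inner ℝ x e : ℝ)) : ‖x‖ ≤ ‖reflH e t x‖ := by
  have h := norm_reflH_sq he t x
  nlinarith [norm_nonneg x, norm_nonneg (reflH e t x)]

lemma continuous_inner_e : Continuous fun x : EuclideanSpace ℝ (Fin N) => (inner ℝ x e : ℝ) :=
  continuous_id.inner continuous_const

lemma continuous_reflH (t : ℝ) : Continuous (reflH e t) := by
  unfold reflH
  exact continuous_id.sub
    ((continuous_const.mul (continuous_inner_e.sub continuous_const)).smul continuous_const)

/-- The linear reflection as a linear map. -/
noncomputable def reflLinMap (e : EuclideanSpace ℝ (Fin N)) :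
    EuclideanSpace ℝ (Fin N) →ₗ[ℝ] EuclideanSpace ℝ (Fin N) where
  toFun x := x - (2 * (inner ℝ x e : ℝ)) • e
  map_add' x y := by
    show (x + y) - (2 * (inner ℝ (x + y) e : ℝ)) • e =
      (x - (2 * (inner ℝ x e : ℝ)) • e) + (y - (2 * (inner ℝ y e : ℝ)) • e)
    rw [inner_add_left, mul_add, add_smul]
    abel
  map_smul' c x := by
    simp only [RingHom.id_apply]
    rw [real_inner_smul_left, smul_sub, smul_smul, mul_left_comm]

lemma reflLinMap_apply (x : EuclideanSpace ℝ (Fin N)) :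
    reflLinMap e x = x - (2 * (inner ℝ x e : ℝ)) • e := rfl

lemma reflLinMap_invol (he : ‖e‖ = 1) : Function.Involutive (reflLinMap e) := by
  intro x
  have h := reflH_invol he 0 x
  simp only [reflH, sub_zero] at h
  rw [reflLinMap_apply, reflLinMap_apply]
  exact h

lemma reflLinMap_norm (he : ‖e‖ = 1) (x : EuclideanSpace ℝ (Fin N)) :
    ‖reflLinMap e x‖ = ‖x‖ := by
  have h := norm_reflH_sq he 0 x
  simp only [reflH, sub_zero, mul_zero] at h
  rw [reflLinMap_apply]
  nlinarith [norm_nonneg x, norm_nonneg (x - (2 * (inner ℝ x e : ℝ)) • e)]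

/-- The reflection as a linear isometry equivalence. -/
noncomputable def reflIso (he : ‖e‖ = 1) :
    EuclideanSpace ℝ (Fin N) ≃ₗᵢ[ℝ] EuclideanSpace ℝ (Fin N) :=
  { LinearEquiv.ofInvolutive (reflLinMap e) (reflLinMap_invol he) with
    norm_map' := reflLinMap_norm he }

lemma reflIso_apply (he : ‖e‖ = 1) (x : EuclideanSpace ℝ (Fin N)) :
    reflIso he x = x - (2 * (inner ℝ x e : ℝ)) • e := rfl

lemma reflH_eq (he : ‖e‖ = 1) (t : ℝ) (x : EuclideanSpace ℝ (Fin N)) :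
    reflH e t x = reflIso he x + (2 * t) • e := by
  rw [reflIso_apply]
  unfold reflH
  rw [mul_sub, sub_smul]
  abel

lemma measurePreserving_reflH (he : ‖e‖ = 1) (t : ℝ) :
    MeasurePreserving (reflH e t) (volume : Measure (EuclideanSpace ℝ (Fin N))) volume := by
  have h1 : MeasurePreserving (reflIso he)
      (volume : Measure (EuclideanSpace ℝ (Fin N))) volume :=
    (reflIso he).measurePreserving
  have h2 : MeasurePreserving (fun x => x + (2 * t) • e)
      (volume : Measure (EuclideanSpace ℝ (Fin N))) volume :=
    measurePreserving_add_right volume _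
  have h3 := h2.comp h1
  convert h3 using 1
  funext x
  exact reflH_eq he t x

/-- reflection as a measurable equivalence -/
noncomputable def reflME (he : ‖e‖ = 1) (t : ℝ) :
    EuclideanSpace ℝ (Fin N) ≃ᵐ EuclideanSpace ℝ (Fin N) where
  toFun := reflH e t
  invFun := reflH e t
  left_inv := reflH_invol he t
  right_inv := reflH_invol he t
  measurable_toFun := (continuous_reflH t).measurable
  measurable_invFun := (continuous_reflH t).measurable

lemma measurableEmbedding_reflH (he : ‖e‖ = 1) (t : ℝ) :
    MeasurableEmbedding (reflH e t) := (reflME he t).measurableEmbedding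

lemma hyperplane_null (he : ‖e‖ = 1) (t : ℝ) :
    volume {x : EuclideanSpace ℝ (Fin N) | (inner ℝ x e : ℝ) = t} = 0 := by
  have hK : ((ℝ ∙ e)ᗮ : Submodule ℝ (EuclideanSpace ℝ (Fin N))) ≠ ⊤ := by
    intro h
    have hm : e ∈ ((ℝ ∙ e)ᗮ : Submodule ℝ (EuclideanSpace ℝ (Fin N))) := h ▸ Submodule.mem_top
    have h0 : (inner ℝ e e : ℝ) = 0 :=
      Submodule.mem_orthogonal_singleton_iff_inner_left.mp hm
    rw [inner_ee he] at h0
    norm_num at h0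
  have hT : MeasurePreserving (fun x : EuclideanSpace ℝ (Fin N) => x + (-t) • e) volume volume :=
    measurePreserving_add_right volume _
  have hset : {x : EuclideanSpace ℝ (Fin N) | (inner ℝ x e : ℝ) = t} =
      (fun x : EuclideanSpace ℝ (Fin N) => x + (-t) • e) ⁻¹'
        (((ℝ ∙ e)ᗮ : Submodule ℝ (EuclideanSpace ℝ (Fin N))) : Set _) := by
    ext x
    simp only [Set.mem_setOf_eq, Set.mem_preimage, SetLike.mem_coe,
      Submodule.mem_orthogonal_singleton_iff_inner_left]
    rw [inner_add_left, real_inner_smul_left, inner_ee he]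
    constructor <;> intro h <;> linarith
  have hms : MeasurableSet (((ℝ ∙ e)ᗮ : Submodule ℝ (EuclideanSpace ℝ (Fin N))) :
      Set (EuclideanSpace ℝ (Fin N))) :=
    (Submodule.closed_of_finiteDimensional ((ℝ ∙ e)ᗮ)).measurableSet
  rw [hset, hT.measure_preimage hms.nullMeasurableSet]
  exact Measure.addHaar_submodule volume _ hK

end geom

/-- Polarization with respect to a half-space containing the origin increases
`∫ F(|x|, U(x)) dx` for integrands `F` that are supermodular in the `y`-variables and
satisfy the monotone-difference condition in `(r, y)`. -/
theorem stmt19 (N m : ℕ) (F : ℝ → (Fin m → ℝ) → ℝ)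
    (hsuper : ∀ r : ℝ, 0 ≤ r → ∀ y : Fin m → ℝ, 0 ≤ y → ∀ h k : ℝ, 0 ≤ h → 0 ≤ k →
      ∀ i j : Fin m, i ≠ j →
        F r (y + Pi.single i h) + F r (y + Pi.single j k) ≤
          F r (y + Pi.single i h + Pi.single j k) + F r y)
    (hmonodiff : ∀ r R : ℝ, 0 ≤ r → r ≤ R → ∀ y : Fin m → ℝ, 0 ≤ y → ∀ h : ℝ, 0 ≤ h →
      ∀ i : Fin m, F R (y + Pi.single i h) + F r y ≤ F r (y + Pi.single i h) + F R y)
    (e : EuclideanSpace ℝ (Fin N)) (he : ‖e‖ = 1) (t : ℝ) (ht : t ≤ 0)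
    (U : Fin m → EuclideanSpace ℝ (Fin N) → ℝ)
    (hUm : ∀ i, Measurable (U i)) (hU0 : ∀ i x, 0 ≤ U i x)
    (hint : Integrable (fun x => F ‖x‖ (fun i => U i x)) volume)
    (hintH : Integrable (fun x => F ‖x‖ (fun i => polarize e t (U i) x)) volume) :
    ∫ x, F ‖x‖ (fun i => U i x) ≤ ∫ x, F ‖x‖ (fun i => polarize e t (U i) x) := by
  classical
  set σ := reflH e t with hσ
  set A : Set (EuclideanSpace ℝ (Fin N)) := {x | t < (inner ℝ x e : ℝ)} with hA
  set B : Set (EuclideanSpace ℝ (Fin N)) := {x | (inner ℝ x e : ℝ) < t} with hB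
  have hφ : Measurable fun x : EuclideanSpace ℝ (Fin N) => (inner ℝ x e : ℝ) :=
    continuous_inner_e.measurable
  have hAm : MeasurableSet A := measurableSet_lt measurable_const hφ
  have hBm : MeasurableSet B := measurableSet_lt hφ measurable_const
  have hσmp : MeasurePreserving σ (volume : Measure (EuclideanSpace ℝ (Fin N))) volume :=
    measurePreserving_reflH he t
  have hσemb : MeasurableEmbedding σ := measurableEmbedding_reflH he t
  have hpre : σ ⁻¹' B = A := by
    ext x
    simp only [Set.mem_preimage, hB, hA, Set.mem_setOf_eq, hσ, inner_reflH he]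
    constructor <;> intro h <;> linarith
  -- decomposition of the integral
  have key : ∀ f : EuclideanSpace ℝ (Fin N) → ℝ, Integrable f volume →
      IntegrableOn (fun x => f x + f (σ x)) A volume ∧
        ∫ x, f x = ∫ x in A, (f x + f (σ x)) := by
    intro f hf
    have hfA : IntegrableOn f A volume := hf.integrableOn
    have hfB : IntegrableOn f B volume := hf.integrableOn
    have hfσA : IntegrableOn (fun x => f (σ x)) A volume := by
      have := (hσmp.integrableOn_comp_preimage hσemb (f := f) (s := B)).mpr hfB
      rwa [hpre] at this
    refine ⟨hfA.add hfσA, ?_⟩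
    have hcompl : (A ∪ B)ᶜ = {x : EuclideanSpace ℝ (Fin N) | (inner ℝ x e : ℝ) = t} := by
      ext x
      simp only [Set.mem_compl_iff, Set.mem_union, hA, hB, Set.mem_setOf_eq]
      constructor
      · intro h
        push_neg at h
        linarith [h.1, h.2]
      · intro h
        push_neg
        constructor <;> simp [h]
    have hnull : volume (A ∪ B)ᶜ = 0 := by rw [hcompl]; exact hyperplane_null he t
    have hae : (A ∪ B : Set (EuclideanSpace ℝ (Fin N))) =ᵐ[volume] Set.univ :=
      ae_eq_univ.mpr hnull
    have hdisj : Disjoint A B := by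
      rw [Set.disjoint_left]
      intro x hx hx'
      simp only [hA, hB, Set.mem_setOf_eq] at hx hx'
      linarith
    calc ∫ x, f x = ∫ x in Set.univ, f x := (setIntegral_univ ..).symm
      _ = ∫ x in A ∪ B, f x := (setIntegral_congr_set hae).symm
      _ = (∫ x in A, f x) + ∫ x in B, f x := setIntegral_union hdisj hBm hfA hfB
      _ = (∫ x in A, f x) + ∫ x in A, f (σ x) := by
          rw [← hσmp.setIntegral_preimage_emb hσemb f B, hpre]
      _ = ∫ x in A, (f x + f (σ x)) := (integral_add hfA hfσA).symm
  obtain ⟨hintf, hf_eq⟩ := key _ hint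
  obtain ⟨hintg, hg_eq⟩ := key _ hintH
  rw [hf_eq, hg_eq]
  refine setIntegral_mono_on hintf hintg hAm ?_
  intro x hx
  have hxA : t < (inner ℝ x e : ℝ) := hx
  have hxt : t ≤ (inner ℝ x e : ℝ) := le_of_lt hxA
  have hgx : (fun i => polarize e t (U i) x) = fun i => max (U i x) (U i (σ x)) := by
    funext i
    simp only [polarize, if_pos hxt, hσ]
  have hinnerσ : (inner ℝ (σ x) e : ℝ) = 2 * t - inner ℝ x e := inner_reflH he t x
  have hgσ : (fun i => polarize e t (U i) (σ x)) = fun i => min (U i x) (U i (σ x)) := by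
    funext i
    have hlt : ¬ t ≤ (inner ℝ (σ x) e : ℝ) := by rw [hinnerσ]; linarith
    simp only [polarize, if_neg hlt]
    rw [show reflH e t (σ x) = x from reflH_invol he t x]
    exact min_comm _ _
  rw [hgx, hgσ]
  exact two_point F hsuper hmonodiff (norm_nonneg x) (norm_le_reflH he ht hxt)
    (fun i => hU0 i x) (fun i => hU0 i (σ x))
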